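/- Let A be a bimatroid on E × F with extended matroid Â on E ⊔ F. Call a pair (S,T) with S ⊆ E, T ⊆ F a vertical regular rectangle if |T| ≤ |S| and there exist I ⊆ S, J ⊆ T with |I| = |J| = |T| and (I,J) a regular minor of A (equivalently r(S,T) = |T|). Then the map (S,T) ↦ (E\S) ∪ T is a bijection from the set of vertical regular rectangles of A to the set of independent sets of the matroid Â. -/

import Mathlib

/-- A bimatroid on `E × F`, given by its collection of regular minors
(pairs `(I, J)` with `I ⊆ E`, `J ⊆ F`, `|I| = |J|`), following Kung's axioms. -/
structure Bimatroid (E F : Type*) [DecidableEq E] [DecidableEq F] where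
  Reg : Finset E → Finset F → Prop
  card_eq : ∀ I J, Reg I J → I.card = J.card
  reg_empty : Reg ∅ ∅
  exch_row : ∀ I J I' J', Reg I J → Reg I' J' → ∀ i' ∈ I' \ I,
    (∃ i ∈ I \ I', Reg (insert i' (I.erase i)) J) ∨
    (∃ j' ∈ J' \ J, Reg (insert i' I) (insert j' J))
  exch_col : ∀ I J I' J', Reg I J → Reg I' J' → ∀ j ∈ J \ J',
    (∃ j' ∈ J' \ J, Reg I (insert j' (J.erase j))) ∨
    (∃ i ∈ I \ I', Reg (I.erase i) (J.erase j))

/-- From a regular minor `(I, J)` one can restrict the column set to any `T ⊆ J`,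
shrinking the rows accordingly. -/
lemma Bimatroid.shrink_cols {E F : Type*} [DecidableEq E] [DecidableEq F]
    (A : Bimatroid E F) :
    ∀ n (I : Finset E) (J T : Finset F), (J \ T).card = n → A.Reg I J → T ⊆ J →
      ∃ I', I' ⊆ I ∧ A.Reg I' T := by
  intro n
  induction n with
  | zero =>
    intro I J T h hreg hsub
    have hJT : J = T := by
      have : J \ T = ∅ := Finset.card_eq_zero.mp h
      exact Finset.Subset.antisymm (fun x hx => by
        by_contra hxT
        exact absurd (Finset.mem_sdiff.mpr ⟨hx, hxT⟩) (by simp [this])) hsub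
    exact ⟨I, le_refl _, hJT ▸ hreg⟩
  | succ n ih =>
    intro I J T h hreg hsub
    have hne : (J \ T).Nonempty := by
      rw [← Finset.card_pos, h]; omega
    obtain ⟨j, hj⟩ := hne
    rw [Finset.mem_sdiff] at hj
    rcases A.exch_col I J ∅ ∅ hreg A.reg_empty j (by simp [hj.1]) with
      ⟨j', hj', _⟩ | ⟨i, hi, hreg'⟩
    · simp at hj'
    · have hsub' : T ⊆ J.erase j :=
        fun x hx => Finset.mem_erase.mpr ⟨fun hxj => hj.2 (hxj ▸ hx), hsub hx⟩
      have hcard : ((J.erase j) \ T).card = n := by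
        have : J.erase j \ T = (J \ T).erase j := by
          ext x; simp [Finset.mem_erase, Finset.mem_sdiff]; tauto
        rw [this, Finset.card_erase_of_mem (Finset.mem_sdiff.mpr hj), h]
        omega
      obtain ⟨I', hI', hreg''⟩ := ih (I.erase i) (J.erase j) T hcard hreg' hsub'
      exact ⟨I', hI'.trans (Finset.erase_subset _ _), hreg''⟩

/-- The map `(S, T) ↦ (E \ S) ∪ T` is a bijection from the set of vertical regular
rectangles of a bimatroid `A` (pairs `(S, T)` with `|T| ≤ |S|` admitting a regular
minor `(I, J)` with `I ⊆ S`, `J ⊆ T`, `|I| = |J| = |T|`) onto the set of independent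
sets of the extended matroid `Â` (subsets of a basis of `Â`). -/
theorem vertical_rectangles_bij_indep {E F : Type*} [Fintype E] [Fintype F]
    [DecidableEq E] [DecidableEq F] (A : Bimatroid E F) :
    Set.BijOn
      (fun p : Finset E × Finset F =>
        (p.1ᶜ.image Sum.inl ∪ p.2.image Sum.inr : Finset (E ⊕ F)))
      {p : Finset E × Finset F | p.2.card ≤ p.1.card ∧
        ∃ I J, A.Reg I J ∧ I ⊆ p.1 ∧ J ⊆ p.2 ∧ I.card = p.2.card ∧ J.card = p.2.card}
      {S : Finset (E ⊕ F) | ∃ I J, A.Reg I J ∧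
        S ⊆ Iᶜ.image Sum.inl ∪ J.image Sum.inr} := by
  refine ⟨?_, ?_, ?_⟩
  · -- MapsTo
    rintro ⟨S, T⟩ ⟨hcard, I, J, hreg, hIS, hJT, hI, hJ⟩
    have hJeqT : J = T := Finset.eq_of_subset_of_card_le hJT (le_of_eq hJ.symm)
    refine ⟨I, J, hreg, Finset.union_subset_union ?_ ?_⟩
    · exact Finset.image_subset_image (Finset.compl_subset_compl.mpr hIS)
    · exact Finset.image_subset_image (le_of_eq hJeqT.symm)
  · -- InjOn
    rintro ⟨S, T⟩ _ ⟨S', T'⟩ _ h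
    simp only [Prod.mk.injEq]
    have hS : S = S' := by
      have : ∀ e : E, e ∈ Sᶜ ↔ e ∈ S'ᶜ := by
        intro e
        have := Finset.ext_iff.mp h (Sum.inl e)
        simpa using this
      have : Sᶜ = S'ᶜ := Finset.ext this
      simpa using congrArg (·ᶜ) this
    have hT : T = T' := by
      refine Finset.ext fun f => ?_
      have := Finset.ext_iff.mp h (Sum.inr f)
      simpa using this
    exact ⟨hS, hT⟩
  · -- SurjOn
    rintro X ⟨I, J, hreg, hX⟩
    classical
    set S : Finset E := (Finset.univ.filter (fun e => Sum.inl e ∈ X))ᶜ with hSdef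
    set T : Finset F := Finset.univ.filter (fun f => Sum.inr f ∈ X) with hTdef
    have hScompl : Sᶜ = Finset.univ.filter (fun e => Sum.inl e ∈ X) := by
      simp [hSdef]
    have hmemS : ∀ e : E, e ∈ Sᶜ ↔ Sum.inl e ∈ X := by
      intro e; rw [hScompl]; simp
    have hmemT : ∀ f : F, f ∈ T ↔ Sum.inr f ∈ X := by
      intro f; rw [hTdef]; simp
    have hIS : I ⊆ S := by
      intro e he
      by_contra hne
      have h1 : Sum.inl e ∈ X := (hmemS e).mp (Finset.mem_compl.mpr hne)
      have := hX h1
      simp only [Finset.mem_union, Finset.mem_image] at this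
      rcases this with ⟨a, ha, hae⟩ | ⟨b, _, hb⟩
      · cases hae; exact (Finset.mem_compl.mp ha) he
      · exact (Sum.inr_ne_inl hb).elim
    have hTJ : T ⊆ J := by
      intro f hf
      have h1 : Sum.inr f ∈ X := (hmemT f).mp hf
      have := hX h1
      simp only [Finset.mem_union, Finset.mem_image] at this
      rcases this with ⟨a, _, ha⟩ | ⟨b, hb, hbf⟩
      · exact (Sum.inl_ne_inr ha).elim
      · cases hbf; exact hb
    obtain ⟨I', hI'I, hreg'⟩ :=
      A.shrink_cols (J \ T).card I J T rfl hreg hTJ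
    have hI'card : I'.card = T.card := A.card_eq _ _ hreg'
    refine ⟨(S, T), ⟨?_, I', T, hreg', hI'I.trans hIS, le_refl _, hI'card, rfl⟩, ?_⟩
    · exact hI'card ▸ Finset.card_le_card (hI'I.trans hIS)
    · -- f (S, T) = X
      refine Finset.ext fun x => ?_
      cases x with
      | inl e =>
        simp only [Finset.mem_union, Finset.mem_image]
        constructor
        · rintro (⟨a, ha, hae⟩ | ⟨b, _, hb⟩)
          · obtain rfl : a = e := by injection hae
            exact (hmemS a).mp ha
          · exact (Sum.inr_ne_inl hb).elim
        · intro hx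
          exact Or.inl ⟨e, (hmemS e).mpr hx, rfl⟩
      | inr f =>
        simp only [Finset.mem_union, Finset.mem_image]
        constructor
        · rintro (⟨a, _, ha⟩ | ⟨b, hb, hbf⟩)
          · exact (Sum.inl_ne_inr ha).elim
          · obtain rfl : b = f := by injection hbf
            exact (hmemT b).mp hb
        · intro hx
          exact Or.inr ⟨f, (hmemT f).mpr hx, rfl⟩
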